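/- Let d : ℕ → ℝ be a real sequence. Each of the following three conditions is equivalent to (∗): (a) for every real sequence x with sup_n |(Ax)_n| < ∞, the series Σ_n |d_n·x_n| converges; (b) for every x with lim_n (Ax)_n existing, the series Σ_n |d_n·x_n| converges; (c) for every x with (Ax)_n → 0, the series Σ_n |d_n·x_n| converges; where (∗) states: there exists M ∈ ℝ such that for every finite set K ⊆ ℕ the series Σ_n |Σ_{k∈K} d_n·C(n,k)| converges with sum at most M. In particular, the α-duals of the three spaces {x : Ax ∈ c₀}, {x : Ax ∈ c}, {x : Ax ∈ ℓ∞} coincide. -/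

import Mathlib

open Filter Topology

/-- `λ_{k−1}` with the convention `λ_{−1} := 0`. -/
noncomputable def lamPrev (lam : ℕ → ℝ) (k : ℕ) : ℝ := if k = 0 then 0 else lam (k - 1)

/-- Entries of the product matrix `A = Λ(B^{r,s}(Δ^{α̃}))`:
`A(n,k) = Σ_{i=k}^{n} ((λ_i − λ_{i−1})/λ_n)·(1/(s+r)^n)·C(n,i)·s^{n−i}·r^{i}·
(−1)^{i−k}·Γ(α̃+1)/((i−k)!·Γ(α̃−i+k+1))` for `k ≤ n` and `0` for `k > n`
(the `Finset.Icc k n` sum is empty when `k > n`). -/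
noncomputable def Amat (r s α : ℝ) (lam : ℕ → ℝ) (n k : ℕ) : ℝ :=
  ∑ i ∈ Finset.Icc k n,
    ((lam i - lamPrev lam i) / lam n) * (1 / (s + r) ^ n) * (n.choose i : ℝ) *
      s ^ (n - i) * r ^ i * (-1 : ℝ) ^ (i - k) *
      (Real.Gamma (α + 1) /
        ((Nat.factorial (i - k) : ℝ) * Real.Gamma (α - (i : ℝ) + (k : ℝ) + 1)))

/-- The `A`-transform of a real sequence `x`: `(Ax)_n = Σ_{k=0}^{n} A(n,k)·x_k`. -/
noncomputable def Atr (r s α : ℝ) (lam : ℕ → ℝ) (x : ℕ → ℝ) (n : ℕ) : ℝ :=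
  ∑ k ∈ Finset.range (n + 1), Amat r s α lam n k * x k

noncomputable def sB (b : ℕ → ℕ → ℝ) (K : Finset ℕ) (n : ℕ) : ℝ := ∑ k ∈ K, b n k
noncomputable def tB (b : ℕ → ℕ → ℝ) (y : ℕ → ℝ) (n : ℕ) : ℝ :=
  ∑ k ∈ Finset.range (n + 1), b n k * y k

lemma tB_extend (b : ℕ → ℕ → ℝ) (hb : ∀ n k, n < k → b n k = 0) (y : ℕ → ℝ)
    {n N : ℕ} (h : n < N) :
    tB b y n = ∑ k ∈ Finset.range N, b n k * y k := by
  apply Finset.sum_subset (Finset.range_subset_range.2 h)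
  intro k _ hk
  rw [hb n k (by simpa using hk), zero_mul]

lemma tB_eq_support (b : ℕ → ℕ → ℝ) (hb : ∀ n k, n < k → b n k = 0) (y : ℕ → ℝ)
    (U : Finset ℕ) (n : ℕ) (hy : ∀ k, k ≤ n → y k ≠ 0 → k ∈ U) :
    tB b y n = ∑ k ∈ U, b n k * y k := by
  have h1 : tB b y n = ∑ k ∈ (Finset.range (n+1)) ∩ U, b n k * y k := by
    symm
    apply Finset.sum_subset (Finset.inter_subset_left)
    intro k hk hk2
    have : y k = 0 := by
      by_contra hne
      exact hk2 (Finset.mem_inter.2 ⟨hk, hy k (by have := Finset.mem_range.1 (Finset.mem_of_mem_inter_left (Finset.mem_inter.2 ⟨hk, hk⟩)); omega) hne⟩)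
    rw [this, mul_zero]
  rw [h1]
  apply Finset.sum_subset (Finset.inter_subset_right)
  intro k hk hk2
  have hkn : n < k := by
    by_contra hle
    exact hk2 (Finset.mem_inter.2 ⟨Finset.mem_range.2 (by omega), hk⟩)
  rw [hb n k hkn, zero_mul]

section C0
variable (b : ℕ → ℕ → ℝ)

/-- total variation of restricted row sums -/
noncomputable def TT (K : Finset ℕ) : ℝ := ∑' n, |sB b K n|
/-- tail beyond row `N` -/
noncomputable def tl (K : Finset ℕ) (N : ℕ) : ℝ := ∑' n, |sB b K (n + (N + 1))|

lemma hB_lem (hsum : ∀ K : Finset ℕ, Summable fun n => |sB b K n|)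
    (hbig : ∀ M : ℝ, ∃ K : Finset ℕ, M < TT b K) (N : ℕ) (Bd : ℝ) :
    ∃ K : Finset ℕ, (∀ k ∈ K, N < k) ∧ Bd ≤ TT b K := by
  classical
  set MN := ∑ K' ∈ (Finset.range (N+1)).powerset, TT b K' with hMN
  obtain ⟨K, hK⟩ := hbig (Bd + MN)
  refine ⟨K.filter (fun k => N < k), fun k hk => (Finset.mem_filter.1 hk).2, ?_⟩
  have hsplit : ∀ n, sB b K n
      = sB b (K.filter (fun k => N < k)) n + sB b (K.filter (fun k => ¬ N < k)) n :=
    fun n => (Finset.sum_filter_add_sum_filter_not K _ _).symm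
  have hTle : TT b K ≤ TT b (K.filter (fun k => N < k)) + TT b (K.filter (fun k => ¬ N < k)) := by
    unfold TT
    rw [← Summable.tsum_add (hsum _) (hsum _)]
    refine Summable.tsum_le_tsum (fun n => ?_) (hsum K) ((hsum _).add (hsum _))
    rw [hsplit n]; exact abs_add_le _ _
  have hmem : K.filter (fun k => ¬ N < k) ∈ (Finset.range (N+1)).powerset := by
    rw [Finset.mem_powerset]
    intro k hk
    have := (Finset.mem_filter.1 hk).2
    exact Finset.mem_range.2 (by omega)
  have hMNle : TT b (K.filter (fun k => ¬ N < k)) ≤ MN :=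
    Finset.single_le_sum (f := fun K' => TT b K')
      (fun K' _ => tsum_nonneg (fun n => abs_nonneg _)) hmem
  linarith

lemma htail_lem (hsum : ∀ K : Finset ℕ, Summable fun n => |sB b K n|)
    (K : Finset ℕ) (ε : ℝ) (hε : 0 < ε) : ∃ N0 : ℕ, ∀ N ≥ N0, tl b K N ≤ ε := by
  have h := tendsto_sum_nat_add (fun n => |sB b K n|)
  obtain ⟨N0, hN0⟩ := (Metric.tendsto_atTop.1 h) ε hε
  refine ⟨N0, fun N hN => ?_⟩
  have h2 := hN0 (N+1) (by omega)
  rw [Real.dist_eq, sub_zero] at h2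
  exact (le_abs_self _).trans h2.le

lemma hIoc_lem (hsum : ∀ K : Finset ℕ, Summable fun n => |sB b K n|)
    (K : Finset ℕ) (a c : ℕ) :
    ∑ n ∈ Finset.Ioc a c, |sB b K n| ≤ tl b K a := by
  have hs : Summable fun n => |sB b K (n + (a+1))| := (summable_nat_add_iff (f := fun n => |sB b K n|) (a+1)).2 (hsum K)
  have h1 : ∑ n ∈ Finset.Ioc a c, |sB b K n|
      = ∑ k ∈ Finset.range (c + 1 - (a+1)), |sB b K (k + (a+1))| := by
    rw [show Finset.Ioc a c = Finset.Ico (a+1) (c+1) from by ext x; simp only [Finset.mem_Ioc, Finset.mem_Ico]; omega,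
      Finset.sum_Ico_eq_sum_range]
    exact Finset.sum_congr rfl (fun k _ => by rw [Nat.add_comm])
  rw [h1]
  exact Summable.sum_le_tsum _ (fun _ _ => abs_nonneg _) hs

end C0

lemma c0_imp (b : ℕ → ℕ → ℝ) (hb : ∀ n k, n < k → b n k = 0)
    (hbase : ∀ y : ℕ → ℝ, Tendsto y atTop (nhds 0) → Summable fun n => |tB b y n|) :
    ∃ M : ℝ, ∀ K : Finset ℕ, (Summable fun n => |sB b K n|) ∧ (∑' n, |sB b K n|) ≤ M := by
  classical
  -- every K gives a summable series
  have hsum : ∀ K : Finset ℕ, Summable fun n => |sB b K n| := by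
    intro K
    set y : ℕ → ℝ := fun k => if k ∈ K then (1:ℝ) else 0 with hy
    have hy0 : Tendsto y atTop (nhds 0) := by
      rw [Metric.tendsto_atTop]
      intro ε hε
      refine ⟨K.sup id + 1, fun n hn => ?_⟩
      have hnK : n ∉ K := fun h => by
        have := Finset.le_sup (f := id) h; simp at this; omega
      simp [hy, Real.dist_eq, if_neg hnK, hε]
    have h1 := hbase y hy0
    have h2 : ∀ n, tB b y n = sB b K n := by
      intro n
      rw [tB_eq_support b hb y K n (fun k _ hk => by
        by_contra hkK
        exact hk (by simp [hy, if_neg hkK]))]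
      exact Finset.sum_congr rfl (fun k hk => by simp [hy, if_pos hk])
    simpa [h2] using h1
  by_contra hcon
  push_neg at hcon
  have hbig : ∀ M : ℝ, ∃ K : Finset ℕ, M < TT b K := by
    intro M
    obtain ⟨K, hK⟩ := hcon M
    exact ⟨K, hK (hsum K)⟩
  -- recursive construction
  set State := ℕ × (ℕ → Finset ℕ) with hState
  set Q : ℕ → State → State → Prop := fun j p q =>
    (∀ i, i ≠ j → q.2 i = p.2 i) ∧
    (∀ k ∈ q.2 j, p.1 < k) ∧
    ((j:ℝ) * 2^j + 2 ≤ TT b (q.2 j)) ∧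
    (p.1 < q.1) ∧
    (∀ k ∈ q.2 j, k ≤ q.1) ∧
    (∀ i, 1 ≤ i → i ≤ j → tl b (q.2 i) q.1 ≤ (1/2)^j) with hQdef
  have hQ : ∀ j p, ∃ q, Q j p q := by
    intro j p
    obtain ⟨K, hKcol, hKT⟩ := hB_lem b hsum hbig p.1 ((j:ℝ) * 2^j + 2)
    set Ks' := Function.update p.2 j K with hKs'
    have hKs'j : Ks' j = K := Function.update_self _ _ _
    choose N0f hN0f using fun i => htail_lem b hsum (Ks' i) ((1/2)^j) (by positivity)
    set N' := max (p.1 + 1) (max (K.sup id) ((Finset.range (j+1)).sup N0f)) with hN'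
    refine ⟨(N', Ks'), fun i hi => Function.update_of_ne hi _ _, ?_, ?_, ?_, ?_, ?_⟩
    · simpa [hKs'j] using hKcol
    · simpa [hKs'j] using hKT
    · simp only [hN']; omega
    · intro k hk
      have hk2 : k ∈ K := by simpa [hKs'j] using hk
      have h1 : k ≤ K.sup id := by simpa using Finset.le_sup (f := id) hk2
      simp only [hN']; omega
    · intro i h1 h2
      apply hN0f i
      have h3 : N0f i ≤ (Finset.range (j+1)).sup N0f :=
        Finset.le_sup (Finset.mem_range.2 (by omega))
      simp only [hN']; omega
  set S : ℕ → State := fun j =>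
    Nat.rec ((0, fun _ => (∅ : Finset ℕ)) : State) (fun n ih => Classical.choose (hQ (n+1) ih)) j
    with hSdef
  have hS : ∀ j, Q (j+1) (S j) (S (j+1)) := fun j => Classical.choose_spec (hQ (j+1) (S j))
  set N : ℕ → ℕ := fun j => (S j).1 with hNdef
  set Kf : ℕ → Finset ℕ := fun j => (S j).2 j with hKfdef
  have hstab : ∀ i j, i ≤ j → (S j).2 i = Kf i := by
    intro i j hij
    induction j with
    | zero => have : i = 0 := by omega
              subst this; rfl
    | succ j ihj =>
      rcases Nat.lt_or_ge i (j+1) with hlt | hge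
      · rw [(hS j).1 i (by omega), ihj (by omega)]
      · have : i = j + 1 := by omega
        subst this; rfl
  have hNlt : ∀ j, N j < N (j+1) := fun j => (hS j).2.2.2.1
  have hNmono : ∀ i j, i ≤ j → N i ≤ N j := by
    intro i j hij
    induction j with
    | zero => have : i = 0 := by omega
              subst this; exact le_refl _
    | succ j ihj =>
      rcases Nat.lt_or_ge i (j+1) with hlt | hge
      · exact (ihj (by omega)).trans (hNlt j).le
      · have : i = j + 1 := by omega
        subst this; exact le_refl _
  have hcol : ∀ j, ∀ k ∈ Kf (j+1), N j < k := fun j => (hS j).2.1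
  have hTlow : ∀ j : ℕ, ((j:ℝ)+1) * 2^(j+1) + 2 ≤ TT b (Kf (j+1)) := by
    intro j
    have := (hS j).2.2.1
    push_cast at this ⊢
    convert this using 2 <;> push_cast <;> ring
  have hle : ∀ j, ∀ k ∈ Kf (j+1), k ≤ N (j+1) := fun j => (hS j).2.2.2.2.1
  have htails : ∀ i j, 1 ≤ i → i ≤ j+1 → tl b (Kf i) (N (j+1)) ≤ (1/2)^(j+1) := by
    intro i j h1 h2
    have h3 := (hS j).2.2.2.2.2 i h1 h2
    rwa [hstab i (j+1) h2] at h3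
  have key : ∀ a c k, a < c → k ∈ Kf (a+1) → k ∈ Kf (c+1) → False := by
    intro a c k hac h1 h2
    have h3 : k ≤ N (a+1) := hle a k h1
    have h4 : N c < k := hcol c k h2
    have h5 : N (a+1) ≤ N c := hNmono (a+1) c (by omega)
    omega
  have key2 : ∀ i i' k, 1 ≤ i → 1 ≤ i' → i ≠ i' → k ∈ Kf i → k ∈ Kf i' → False := by
    intro i i' k h1 h1' hne hk hk'
    obtain ⟨a, rfl⟩ : ∃ a, i = a + 1 := ⟨i - 1, by omega⟩
    obtain ⟨c, rfl⟩ : ∃ c, i' = c + 1 := ⟨i' - 1, by omega⟩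
    rcases lt_trichotomy a c with h | h | h
    · exact key a c k h hk hk'
    · omega
    · exact key c a k h hk' hk
  set y : ℕ → ℝ := fun k => if h : ∃ i, 1 ≤ i ∧ k ∈ Kf i then (1:ℝ)/((Nat.find h : ℕ):ℝ) else 0
    with hydef
  have hyval : ∀ i, 1 ≤ i → ∀ k ∈ Kf i, y k = 1/(i:ℝ) := by
    intro i h1 k hk
    have hex : ∃ i', 1 ≤ i' ∧ k ∈ Kf i' := ⟨i, h1, hk⟩
    have hfind : Nat.find hex = i := by
      obtain ⟨hf1, hf2⟩ := Nat.find_spec hex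
      by_contra hne
      exact key2 _ _ k hf1 h1 hne hf2 hk
    simp only [hydef, dif_pos hex, hfind]
  have hybound : ∀ j k, N j < k → |y k| ≤ 1/((j:ℝ)+1) := by
    intro j k hk
    by_cases hex : ∃ i, 1 ≤ i ∧ k ∈ Kf i
    · obtain ⟨hf1, hf2⟩ := Nat.find_spec hex
      set i0 := Nat.find hex with hi0
      obtain ⟨a, ha⟩ : ∃ a, i0 = a + 1 := ⟨i0 - 1, by omega⟩
      have hkN : k ≤ N i0 := by rw [ha]; exact hle a k (ha ▸ hf2)
      have hji : j + 1 ≤ i0 := by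
        by_contra hcon2
        have : N i0 ≤ N j := hNmono i0 j (by omega)
        omega
      have hy1 : y k = 1/((i0:ℝ)) := by simp only [hydef, dif_pos hex]; rfl
      rw [hy1, abs_of_nonneg (by positivity)]
      apply one_div_le_one_div_of_le (by positivity)
      have : ((j:ℝ)+1) ≤ (i0:ℝ) := by exact_mod_cast hji
      linarith
    · simp only [hydef, dif_neg hex, abs_zero]
      positivity
  have hy0 : Tendsto y atTop (nhds 0) := by
    rw [Metric.tendsto_atTop]
    intro ε hε
    obtain ⟨j, hj⟩ := exists_nat_one_div_lt hε
    refine ⟨N j + 1, fun n hn => ?_⟩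
    rw [Real.dist_eq, sub_zero]
    exact lt_of_le_of_lt (hybound j n (by omega)) hj
  have hg := hbase y hy0
  -- block identity
  have hdisjP : ∀ j : ℕ, (↑(Finset.Icc 1 j) : Set ℕ).PairwiseDisjoint Kf := by
    intro j i hi i' hi' hne
    simp only [Finset.coe_Icc, Set.mem_Icc] at hi hi'
    exact Finset.disjoint_left.2 (fun k hk hk' => (key2 i i' k hi.1 hi'.1 hne hk hk').elim)
  have hblock : ∀ j n, n ≤ N j → tB b y n = ∑ i ∈ Finset.Icc 1 j, (1/(i:ℝ)) * sB b (Kf i) n := by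
    intro j n hn
    have hsup : ∀ k, k ≤ n → y k ≠ 0 → k ∈ (Finset.Icc 1 j).biUnion Kf := by
      intro k hk hne
      have hex : ∃ i, 1 ≤ i ∧ k ∈ Kf i := by
        by_contra hno
        exact hne (by simp only [hydef, dif_neg hno])
      obtain ⟨i, h1, hki⟩ := hex
      have hij : i ≤ j := by
        by_contra hgt
        push_neg at hgt
        obtain ⟨a, rfl⟩ : ∃ a, i = a + 1 := ⟨i - 1, by omega⟩
        have h2 : N a < k := hcol a k hki
        have h3 : N j ≤ N a := hNmono j a (by omega)
        omega
      exact Finset.mem_biUnion.2 ⟨i, Finset.mem_Icc.2 ⟨h1, hij⟩, hki⟩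
    rw [tB_eq_support b hb y _ n hsup, Finset.sum_biUnion (hdisjP j)]
    apply Finset.sum_congr rfl
    intro i hi
    obtain ⟨h1, _⟩ := Finset.mem_Icc.1 hi
    unfold sB
    rw [Finset.mul_sum]
    apply Finset.sum_congr rfl
    intro k hk
    rw [hyval i h1 k hk]; ring
  -- rows up to N j kill block j+1
  have hz : ∀ j n, n ≤ N j → sB b (Kf (j+1)) n = 0 := by
    intro j n hn
    apply Finset.sum_eq_zero
    intro k hk
    exact hb n k (by have := hcol j k hk; omega)
  -- head estimate
  have hhead : ∀ j : ℕ, ((j:ℝ)+1) * 2^(j+1) + 1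
      ≤ ∑ n ∈ Finset.Ioc (N j) (N (j+1)), |sB b (Kf (j+1)) n| := by
    intro j
    have e1 : ∑ n ∈ Finset.Ioc (N j) (N (j+1)), |sB b (Kf (j+1)) n|
        = ∑ n ∈ Finset.range (N (j+1) + 1), |sB b (Kf (j+1)) n| := by
      apply Finset.sum_subset
      · intro n hn
        obtain ⟨_, h2⟩ := Finset.mem_Ioc.1 hn
        exact Finset.mem_range.2 (by omega)
      · intro n hn hn2
        have hnr := Finset.mem_range.1 hn
        have : n ≤ N j := by
          by_contra hcon2
          exact hn2 (Finset.mem_Ioc.2 ⟨by omega, by omega⟩)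
        rw [hz j n this, abs_zero]
    have e2 := Summable.sum_add_tsum_nat_add (f := fun n => |sB b (Kf (j+1)) n|) (N (j+1) + 1)
      (hsum (Kf (j+1)))
    have e3 : tl b (Kf (j+1)) (N (j+1)) ≤ (1/2)^(j+1) := htails (j+1) j (by omega) (le_refl _)
    have e4 : ((1:ℝ)/2)^(j+1) ≤ 1 := pow_le_one₀ (by norm_num) (by norm_num)
    have e5 := hTlow j
    rw [e1]
    have heq : ∑ i ∈ Finset.range (N (j+1) + 1), |sB b (Kf (j+1)) i|
        + tl b (Kf (j+1)) (N (j+1)) = TT b (Kf (j+1)) := e2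
    linarith [heq]
  -- interference estimate
  have hint : ∀ j i, 1 ≤ i → i ≤ j →
      ∑ n ∈ Finset.Ioc (N j) (N (j+1)), |sB b (Kf i) n| ≤ (1/2)^j := by
    intro j i h1 h2
    obtain ⟨j', rfl⟩ : ∃ j', j = j' + 1 := ⟨j - 1, by omega⟩
    exact (hIoc_lem b hsum _ _ _).trans (htails i j' h1 h2)
  -- block estimate
  have hblockest : ∀ j : ℕ, (1:ℝ) ≤ ∑ n ∈ Finset.Ioc (N j) (N (j+1)), |tB b y n| := by
    intro j
    have hlow : ∀ n ∈ Finset.Ioc (N j) (N (j+1)),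
        (1/((j:ℝ)+1)) * |sB b (Kf (j+1)) n|
          - ∑ i ∈ Finset.Icc 1 j, (1/(i:ℝ)) * |sB b (Kf i) n| ≤ |tB b y n| := by
      intro n hn
      obtain ⟨hn1, hn2⟩ := Finset.mem_Ioc.1 hn
      have hsplit : tB b y n = (1/((j:ℝ)+1)) * sB b (Kf (j+1)) n
          + ∑ i ∈ Finset.Icc 1 j, (1/(i:ℝ)) * sB b (Kf i) n := by
        rw [hblock (j+1) n hn2]
        rw [show Finset.Icc 1 (j+1) = insert (j+1) (Finset.Icc 1 j) from by
          ext m; simp [Finset.mem_Icc, Finset.mem_insert]; omega]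
        rw [Finset.sum_insert (by simp)]
        push_cast
        ring
      have habs1 : (1/((j:ℝ)+1)) * |sB b (Kf (j+1)) n|
          = |(1/((j:ℝ)+1)) * sB b (Kf (j+1)) n| := by
        rw [abs_mul, abs_of_nonneg (by positivity : (0:ℝ) ≤ 1/((j:ℝ)+1))]
      have habs2 : |∑ i ∈ Finset.Icc 1 j, (1/(i:ℝ)) * sB b (Kf i) n|
          ≤ ∑ i ∈ Finset.Icc 1 j, (1/(i:ℝ)) * |sB b (Kf i) n| := by
        refine (Finset.abs_sum_le_sum_abs _ _).trans (le_of_eq ?_)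
        apply Finset.sum_congr rfl
        intro i hi
        rw [abs_mul, abs_of_nonneg (by positivity : (0:ℝ) ≤ 1/((i:ℝ)))]
      have htri : |(1/((j:ℝ)+1)) * sB b (Kf (j+1)) n|
          - |∑ i ∈ Finset.Icc 1 j, (1/(i:ℝ)) * sB b (Kf i) n| ≤ |tB b y n| := by
        rw [hsplit]
        have := abs_sub_abs_le_abs_sub ((1/((j:ℝ)+1)) * sB b (Kf (j+1)) n)
          (-(∑ i ∈ Finset.Icc 1 j, (1/(i:ℝ)) * sB b (Kf i) n))
        rw [abs_neg, sub_neg_eq_add] at this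
        exact this
      linarith
    have hsumlow : (1/((j:ℝ)+1)) * (∑ n ∈ Finset.Ioc (N j) (N (j+1)), |sB b (Kf (j+1)) n|)
        - ∑ i ∈ Finset.Icc 1 j, (1/(i:ℝ)) * (∑ n ∈ Finset.Ioc (N j) (N (j+1)), |sB b (Kf i) n|)
        ≤ ∑ n ∈ Finset.Ioc (N j) (N (j+1)), |tB b y n| := by
      refine le_trans (le_of_eq ?_) (Finset.sum_le_sum hlow)
      rw [Finset.sum_sub_distrib, Finset.mul_sum]
      congr 1
      rw [Finset.sum_comm]
      apply Finset.sum_congr rfl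
      intro i _
      rw [Finset.mul_sum]
    have hintsum : ∑ i ∈ Finset.Icc 1 j, (1/(i:ℝ)) * (∑ n ∈ Finset.Ioc (N j) (N (j+1)), |sB b (Kf i) n|)
        ≤ (j:ℝ) * (1/2)^j := by
      calc ∑ i ∈ Finset.Icc 1 j, (1/(i:ℝ)) * (∑ n ∈ Finset.Ioc (N j) (N (j+1)), |sB b (Kf i) n|)
          ≤ ∑ i ∈ Finset.Icc 1 j, ((1:ℝ)/2)^j := by
            apply Finset.sum_le_sum
            intro i hi
            obtain ⟨h1, h2⟩ := Finset.mem_Icc.1 hi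
            have hnn : (0:ℝ) ≤ ∑ n ∈ Finset.Ioc (N j) (N (j+1)), |sB b (Kf i) n| :=
              Finset.sum_nonneg (fun _ _ => abs_nonneg _)
            have hile : (1/(i:ℝ)) ≤ 1 := by
              rw [div_le_one (by exact_mod_cast h1 : (0:ℝ) < (i:ℝ))]
              exact_mod_cast h1
            calc (1/(i:ℝ)) * (∑ n ∈ Finset.Ioc (N j) (N (j+1)), |sB b (Kf i) n|)
                ≤ 1 * (∑ n ∈ Finset.Ioc (N j) (N (j+1)), |sB b (Kf i) n|) := by
                  apply mul_le_mul_of_nonneg_right hile hnn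
              _ = ∑ n ∈ Finset.Ioc (N j) (N (j+1)), |sB b (Kf i) n| := one_mul _
              _ ≤ (1/2)^j := hint j i h1 h2
        _ = (j:ℝ) * (1/2)^j := by
            rw [Finset.sum_const, Nat.card_Icc]
            simp [nsmul_eq_mul]
    have hmain : (1:ℝ) ≤ (1/((j:ℝ)+1)) * (((j:ℝ)+1) * 2^(j+1) + 1) - (j:ℝ) * (1/2)^j := by
      have hja : (0:ℝ) < (j:ℝ)+1 := by positivity
      have h1 : (1/((j:ℝ)+1)) * (((j:ℝ)+1) * 2^(j+1) + 1) = 2^(j+1) + 1/((j:ℝ)+1) := by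
        field_simp
      have h2 : (j:ℝ) * (1/2)^j ≤ 1 := by
        have hj2 : (j:ℝ) ≤ 2^j := by
          have := Nat.lt_two_pow_self (n := j)
          exact_mod_cast this.le
        have h2j : (0:ℝ) < 2^j := by positivity
        rw [one_div, inv_pow, mul_inv_le_iff₀ h2j, one_mul]
        exact hj2
      have h3 : (2:ℝ) ≤ 2^(j+1) := by
        calc (2:ℝ) = 2^1 := (pow_one 2).symm
        _ ≤ 2^(j+1) := pow_le_pow_right₀ (by norm_num) (by omega)
      have h4 : (0:ℝ) < 1/((j:ℝ)+1) := by positivity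
      linarith
    have hh := hhead j
    have hmono1 : (1/((j:ℝ)+1)) * (((j:ℝ)+1) * 2^(j+1) + 1)
        ≤ (1/((j:ℝ)+1)) * (∑ n ∈ Finset.Ioc (N j) (N (j+1)), |sB b (Kf (j+1)) n|) := by
      apply mul_le_mul_of_nonneg_left hh (by positivity)
    linarith
  -- sum over blocks and contradiction
  have hfinal : ∀ J : ℕ, (J:ℝ) ≤ ∑ n ∈ Finset.Ioc (N 0) (N J), |tB b y n| := by
    intro J
    induction J with
    | zero => simp
    | succ J ihJ =>
      rw [← Finset.sum_Ioc_consecutive _ (hNmono 0 J (by omega)) (hNlt J).le]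
      push_cast
      linarith [hblockest J]
  obtain ⟨J, hJ⟩ := exists_nat_gt (∑' n, |tB b y n|)
  have h2 := (hfinal J).trans (Summable.sum_le_tsum _ (fun _ _ => abs_nonneg _) hg)
  linarith




lemma step_abs (F : Finset ℕ) (A B : ℕ → ℝ) (t : ℝ) (ht : |t| ≤ 1) :
    ∑ n ∈ F, |A n + B n * t| ≤
      max (∑ n ∈ F, |A n + B n|) (∑ n ∈ F, |A n - B n|) := by
  obtain ⟨ht1, ht2⟩ := abs_le.1 ht
  have hθ1 : (0:ℝ) ≤ (1 + t)/2 := by linarith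
  have hθ2 : (0:ℝ) ≤ (1 - t)/2 := by linarith
  have h1 : ∀ n, |A n + B n * t| ≤ (1+t)/2 * |A n + B n| + (1-t)/2 * |A n - B n| := by
    intro n
    have he : A n + B n * t = (1+t)/2 * (A n + B n) + (1-t)/2 * (A n - B n) := by ring
    calc |A n + B n * t| = |(1+t)/2 * (A n + B n) + (1-t)/2 * (A n - B n)| := by rw [he]
      _ ≤ |(1+t)/2 * (A n + B n)| + |(1-t)/2 * (A n - B n)| := abs_add_le _ _
      _ = (1+t)/2 * |A n + B n| + (1-t)/2 * |A n - B n| := by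
          rw [abs_mul, abs_mul, abs_of_nonneg hθ1, abs_of_nonneg hθ2]
  calc ∑ n ∈ F, |A n + B n * t|
      ≤ ∑ n ∈ F, ((1+t)/2 * |A n + B n| + (1-t)/2 * |A n - B n|) :=
        Finset.sum_le_sum fun n _ => h1 n
    _ = (1+t)/2 * (∑ n ∈ F, |A n + B n|) + (1-t)/2 * (∑ n ∈ F, |A n - B n|) := by
        rw [Finset.sum_add_distrib, Finset.mul_sum, Finset.mul_sum]
    _ ≤ (1+t)/2 * max (∑ n ∈ F, |A n + B n|) (∑ n ∈ F, |A n - B n|)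
        + (1-t)/2 * max (∑ n ∈ F, |A n + B n|) (∑ n ∈ F, |A n - B n|) := by
        gcongr
        · exact le_max_left _ _
        · exact le_max_right _ _
    _ = max (∑ n ∈ F, |A n + B n|) (∑ n ∈ F, |A n - B n|) := by ring

lemma extremize (b : ℕ → ℕ → ℝ) (G : Finset ℕ) :
    ∀ (F : Finset ℕ) (c y : ℕ → ℝ), (∀ k ∈ G, |y k| ≤ 1) →
    ∃ K ⊆ G, ∑ n ∈ F, |c n + ∑ k ∈ G, b n k * y k| ≤
      ∑ n ∈ F, |c n + ((∑ k ∈ K, b n k) - ∑ k ∈ G \ K, b n k)| := by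
  induction G using Finset.induction_on with
  | empty =>
      intro F c y _
      exact ⟨∅, Finset.Subset.refl _, by simp⟩
  | @insert a G ha ih =>
      intro F c y hy
      have hya : |y a| ≤ 1 := hy a (Finset.mem_insert_self _ _)
      obtain ⟨K, hKG, hK⟩ := ih F (fun n => c n + b n a * y a) y
        (fun k hk => hy k (Finset.mem_insert_of_mem hk))
      have haK : a ∉ K := fun h => ha (hKG h)
      have haGK : a ∉ G \ K := fun h => ha (Finset.mem_sdiff.1 h).1
      have hstart : ∑ n ∈ F, |c n + ∑ k ∈ insert a G, b n k * y k|
          ≤ ∑ n ∈ F, |(c n + ((∑ k ∈ K, b n k) - ∑ k ∈ G \ K, b n k)) + b n a * y a| := by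
        refine le_trans (le_of_eq ?_) (hK.trans (le_of_eq ?_))
        · apply Finset.sum_congr rfl; intro n _
          rw [Finset.sum_insert ha]; ring_nf
        · apply Finset.sum_congr rfl; intro n _; ring_nf
      have hsd : insert a G \ insert a K = G \ K := by
        ext k
        simp only [Finset.mem_sdiff, Finset.mem_insert]
        constructor
        · rintro ⟨rfl | hk, h2⟩
          · exact absurd (Or.inl rfl) h2
          · exact ⟨hk, fun hkK => h2 (Or.inr hkK)⟩
        · rintro ⟨hk, hkK⟩
          exact ⟨Or.inr hk, by rintro (rfl | h); exacts [ha hk, hkK h]⟩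
      have hmax := step_abs F (fun n => c n + ((∑ k ∈ K, b n k) - ∑ k ∈ G \ K, b n k))
        (fun n => b n a) (y a) hya
      rcases max_cases (∑ n ∈ F, |(c n + ((∑ k ∈ K, b n k) - ∑ k ∈ G \ K, b n k)) + b n a|)
        (∑ n ∈ F, |(c n + ((∑ k ∈ K, b n k) - ∑ k ∈ G \ K, b n k)) - b n a|) with
        ⟨hmeq, _⟩ | ⟨hmeq, _⟩
      · refine ⟨insert a K, Finset.insert_subset_insert a hKG, ?_⟩
        refine hstart.trans ((hmax.trans (le_of_eq hmeq)).trans (le_of_eq ?_))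
        apply Finset.sum_congr rfl; intro n _
        rw [Finset.sum_insert haK, hsd]
        ring_nf
      · refine ⟨K, hKG.trans (Finset.subset_insert a G), ?_⟩
        refine hstart.trans ((hmax.trans (le_of_eq hmeq)).trans (le_of_eq ?_))
        apply Finset.sum_congr rfl; intro n _
        rw [Finset.insert_sdiff_of_notMem _ haK, Finset.sum_insert haGK]
        ring_nf


lemma star_imp (b : ℕ → ℕ → ℝ) (hb : ∀ n k, n < k → b n k = 0) (M : ℝ)
    (hM : ∀ K : Finset ℕ, (Summable fun n => |sB b K n|) ∧ (∑' n, |sB b K n|) ≤ M)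
    (y : ℕ → ℝ) (hy : ∃ M', ∀ n, |y n| ≤ M') :
    Summable fun n => |tB b y n| := by
  obtain ⟨M', hM'⟩ := hy
  have hM'0 : 0 ≤ M' := (abs_nonneg _).trans (hM' 0)
  apply summable_of_sum_range_le (c := (M' + 1) * (M + M)) (fun n => abs_nonneg _)
  intro N
  have hrw : ∑ n ∈ Finset.range N, |tB b y n|
      = ∑ n ∈ Finset.range N, |(0:ℝ) + ∑ k ∈ Finset.range N, b n k * ((M'+1) * (y k / (M'+1)))| := by
    apply Finset.sum_congr rfl
    intro n hn
    rw [tB_extend b hb y (Finset.mem_range.1 hn), zero_add]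
    congr 1
    apply Finset.sum_congr rfl
    intro k _
    rw [mul_div_cancel₀ (y k) (by linarith : M' + 1 ≠ 0)]
  rw [hrw]
  have hy1 : ∀ k ∈ Finset.range N, |y k / (M'+1)| ≤ 1 := by
    intro k _
    rw [abs_div, abs_of_nonneg (by linarith : (0:ℝ) ≤ M' + 1)]
    rw [div_le_one (by linarith)]
    exact (hM' k).trans (by linarith)
  obtain ⟨K, hKG, hK⟩ := extremize b (Finset.range N) (Finset.range N) (fun _ => 0)
    (fun k => y k / (M'+1)) hy1
  have hscale : ∀ n, (0:ℝ) + ∑ k ∈ Finset.range N, b n k * ((M'+1) * (y k / (M'+1)))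
      = (M'+1) * ((0:ℝ) + ∑ k ∈ Finset.range N, b n k * (y k / (M'+1))) := by
    intro n
    rw [zero_add, zero_add, Finset.mul_sum]
    apply Finset.sum_congr rfl
    intro k _; ring
  calc ∑ n ∈ Finset.range N, |(0:ℝ) + ∑ k ∈ Finset.range N, b n k * ((M'+1) * (y k / (M'+1)))|
      = (M'+1) * ∑ n ∈ Finset.range N, |(0:ℝ) + ∑ k ∈ Finset.range N, b n k * (y k / (M'+1))| := by
        rw [Finset.mul_sum]
        apply Finset.sum_congr rfl
        intro n _
        rw [hscale n, abs_mul, abs_of_nonneg (by linarith : (0:ℝ) ≤ M'+1)]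
    _ ≤ (M'+1) * ∑ n ∈ Finset.range N, |(0:ℝ) + ((∑ k ∈ K, b n k) - ∑ k ∈ Finset.range N \ K, b n k)| := by
        apply mul_le_mul_of_nonneg_left hK (by linarith)
    _ ≤ (M'+1) * (M + M) := by
        apply mul_le_mul_of_nonneg_left _ (by linarith)
        calc ∑ n ∈ Finset.range N, |(0:ℝ) + ((∑ k ∈ K, b n k) - ∑ k ∈ Finset.range N \ K, b n k)|
            ≤ ∑ n ∈ Finset.range N, (|sB b K n| + |sB b (Finset.range N \ K) n|) := by
              apply Finset.sum_le_sum
              intro n _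
              rw [zero_add]
              exact abs_sub _ _
          _ = ∑ n ∈ Finset.range N, |sB b K n| + ∑ n ∈ Finset.range N, |sB b (Finset.range N \ K) n| :=
              Finset.sum_add_distrib
          _ ≤ M + M := by
              apply add_le_add
              · exact (Summable.sum_le_tsum _ (fun _ _ => abs_nonneg _) (hM K).1).trans (hM K).2
              · exact (Summable.sum_le_tsum _ (fun _ _ => abs_nonneg _) (hM _).1).trans (hM _).2



/-- for a real sequence `d`, each of the conditions
(a) `Σ_n |d_n·x_n| < ∞` for all `x` with `Ax ∈ ℓ∞`,
(b) `Σ_n |d_n·x_n| < ∞` for all `x` with `Ax ∈ c`,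
(c) `Σ_n |d_n·x_n| < ∞` for all `x` with `Ax ∈ c₀`,
is equivalent to (∗): there is `M` such that for every finite `K ⊆ ℕ` the series
`Σ_n |Σ_{k∈K} d_n·C(n,k)|` converges with sum at most `M`. In particular the
α-duals of the three spaces coincide. -/
theorem alpha_duals (r s α : ℝ) (lam : ℕ → ℝ)
    (hr : r ≠ 0) (hsr : s + r ≠ 0) (hα : 0 < α) (hαint : ∀ m : ℤ, α ≠ (m : ℝ))
    (hlam0 : 0 < lam 0) (hmono : StrictMono lam) (hlam : Tendsto lam atTop atTop)
    (C : ℕ → ℕ → ℝ) (hCtri : ∀ n k : ℕ, n < k → C n k = 0)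
    (hAC : ∀ n k : ℕ, (∑ i ∈ Finset.range (max n k + 1), Amat r s α lam n i * C i k)
        = if n = k then 1 else 0)
    (hCA : ∀ n k : ℕ, (∑ i ∈ Finset.range (max n k + 1), C n i * Amat r s α lam i k)
        = if n = k then 1 else 0)
    (d : ℕ → ℝ) :
    ((∀ x : ℕ → ℝ, (∃ M : ℝ, ∀ n, |Atr r s α lam x n| ≤ M) →
        Summable fun n => |d n * x n|) ↔
      (∃ M : ℝ, ∀ K : Finset ℕ,
        (Summable fun n => |∑ k ∈ K, d n * C n k|) ∧
          (∑' n, |∑ k ∈ K, d n * C n k|) ≤ M)) ∧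
    ((∀ x : ℕ → ℝ, (∃ l : ℝ, Tendsto (Atr r s α lam x) atTop (nhds l)) →
        Summable fun n => |d n * x n|) ↔
      (∃ M : ℝ, ∀ K : Finset ℕ,
        (Summable fun n => |∑ k ∈ K, d n * C n k|) ∧
          (∑' n, |∑ k ∈ K, d n * C n k|) ≤ M)) ∧
    ((∀ x : ℕ → ℝ, Tendsto (Atr r s α lam x) atTop (nhds 0) →
        Summable fun n => |d n * x n|) ↔
      (∃ M : ℝ, ∀ K : Finset ℕ,
        (Summable fun n => |∑ k ∈ K, d n * C n k|) ∧
          (∑' n, |∑ k ∈ K, d n * C n k|) ≤ M)) := by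
  classical
  set b : ℕ → ℕ → ℝ := fun n k => d n * C n k with hbdef
  have hbtri : ∀ n k, n < k → b n k = 0 := fun n k h => by
    simp only [hbdef, hCtri n k h, mul_zero]
  have hAtri : ∀ n k, n < k → Amat r s α lam n k = 0 := by
    intro n k h
    unfold Amat
    rw [Finset.Icc_eq_empty (by omega : ¬ k ≤ n)]
    simp
  set Cxv : (ℕ → ℝ) → ℕ → ℝ := fun y n => ∑ k ∈ Finset.range (n+1), C n k * y k with hCxv
  have claim2 : ∀ (y : ℕ → ℝ) (n : ℕ), Atr r s α lam (Cxv y) n = y n := by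
    intro y n
    unfold Atr
    have h1 : ∀ k ∈ Finset.range (n+1), Amat r s α lam n k * Cxv y k
        = ∑ j ∈ Finset.range (n+1), Amat r s α lam n k * (C k j * y j) := by
      intro k hk
      have hkn := Finset.mem_range.1 hk
      have he : Cxv y k = ∑ j ∈ Finset.range (n+1), C k j * y j := by
        rw [hCxv]
        apply Finset.sum_subset (Finset.range_subset_range.2 (by omega))
        intro j _ hj
        rw [hCtri k j (by simpa using hj), zero_mul]
      rw [he, Finset.mul_sum]
    rw [Finset.sum_congr rfl h1, Finset.sum_comm]
    have h2 : ∀ j ∈ Finset.range (n+1),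
        ∑ k ∈ Finset.range (n+1), Amat r s α lam n k * (C k j * y j)
          = (if n = j then 1 else 0) * y j := by
      intro j hj
      have hjn := Finset.mem_range.1 hj
      have h3 : ∑ k ∈ Finset.range (n+1), Amat r s α lam n k * (C k j * y j)
          = (∑ k ∈ Finset.range (n+1), Amat r s α lam n k * C k j) * y j := by
        rw [Finset.sum_mul]
        exact Finset.sum_congr rfl (fun k _ => by ring)
      rw [h3]
      have h4 := hAC n j
      rw [show max n j = n from by omega] at h4
      rw [h4]
    rw [Finset.sum_congr rfl h2]
    simp
  have claim1 : ∀ (x : ℕ → ℝ) (n : ℕ), Cxv (Atr r s α lam x) n = x n := by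
    intro x n
    rw [hCxv]
    simp only []
    have h1 : ∀ k ∈ Finset.range (n+1), C n k * Atr r s α lam x k
        = ∑ j ∈ Finset.range (n+1), C n k * (Amat r s α lam k j * x j) := by
      intro k hk
      have hkn := Finset.mem_range.1 hk
      have he : Atr r s α lam x k = ∑ j ∈ Finset.range (n+1), Amat r s α lam k j * x j := by
        unfold Atr
        apply Finset.sum_subset (Finset.range_subset_range.2 (by omega))
        intro j _ hj
        rw [hAtri k j (by simpa using hj), zero_mul]
      rw [he, Finset.mul_sum]
    rw [Finset.sum_congr rfl h1, Finset.sum_comm]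
    have h2 : ∀ j ∈ Finset.range (n+1),
        ∑ k ∈ Finset.range (n+1), C n k * (Amat r s α lam k j * x j)
          = (if n = j then 1 else 0) * x j := by
      intro j hj
      have hjn := Finset.mem_range.1 hj
      have h3 : ∑ k ∈ Finset.range (n+1), C n k * (Amat r s α lam k j * x j)
          = (∑ k ∈ Finset.range (n+1), C n k * Amat r s α lam k j) * x j := by
        rw [Finset.sum_mul]
        exact Finset.sum_congr rfl (fun k _ => by ring)
      rw [h3]
      have h4 := hCA n j
      rw [show max n j = n from by omega] at h4
      rw [h4]
    rw [Finset.sum_congr rfl h2]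
    simp
  have hb_t : ∀ (y : ℕ → ℝ) (n : ℕ), d n * Cxv y n = tB b y n := by
    intro y n
    rw [hCxv]
    unfold tB
    simp only []
    rw [Finset.mul_sum]
    exact Finset.sum_congr rfl (fun k _ => by rw [hbdef]; ring)
  have htrans : ∀ P : (ℕ → ℝ) → Prop,
      ((∀ x, P (Atr r s α lam x) → Summable fun n => |d n * x n|) ↔
       (∀ y, P y → Summable fun n => |tB b y n|)) := by
    intro P
    constructor
    · intro H y hPy
      have hx := H (Cxv y) (by rwa [show Atr r s α lam (Cxv y) = y from funext (claim2 y)])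
      have he : ∀ n, d n * Cxv y n = tB b y n := hb_t y
      simp only [he] at hx
      exact hx
    · intro H x hPx
      have hy := H (Atr r s α lam x) hPx
      have he : ∀ n, tB b (Atr r s α lam x) n = d n * x n := by
        intro n
        rw [← hb_t, claim1]
      simp only [he] at hy
      exact hy
  have hconv_bdd : ∀ y : ℕ → ℝ, (∃ l, Tendsto y atTop (nhds l)) → ∃ M, ∀ n, |y n| ≤ M := by
    rintro y ⟨l, hl⟩
    obtain ⟨M, hM⟩ := hl.abs.bddAbove_range
    exact ⟨M, fun n => hM (Set.mem_range_self n)⟩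
  have hstar_eq : ∀ K : Finset ℕ, (fun n => |∑ k ∈ K, d n * C n k|) = fun n => |sB b K n| := by
    intro K
    funext n
    unfold sB
    congr 1
  have hcs : (∀ y : ℕ → ℝ, Tendsto y atTop (nhds 0) → Summable fun n => |tB b y n|) →
      (∃ M : ℝ, ∀ K : Finset ℕ, (Summable fun n => |∑ k ∈ K, d n * C n k|) ∧
        (∑' n, |∑ k ∈ K, d n * C n k|) ≤ M) := by
    intro h
    obtain ⟨M, hM⟩ := c0_imp b hbtri h
    exact ⟨M, fun K => by rw [hstar_eq K] at *; exact hM K⟩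
  have hsa : (∃ M : ℝ, ∀ K : Finset ℕ, (Summable fun n => |∑ k ∈ K, d n * C n k|) ∧
        (∑' n, |∑ k ∈ K, d n * C n k|) ≤ M) →
      (∀ y : ℕ → ℝ, (∃ M, ∀ n, |y n| ≤ M) → Summable fun n => |tB b y n|) := by
    rintro ⟨M, hM⟩ y hy
    refine star_imp b hbtri M (fun K => ?_) y hy
    have := hM K
    rw [hstar_eq K] at this
    exact this
  have hab : (∀ y : ℕ → ℝ, (∃ M, ∀ n, |y n| ≤ M) → Summable fun n => |tB b y n|) →
      (∀ y : ℕ → ℝ, (∃ l, Tendsto y atTop (nhds l)) → Summable fun n => |tB b y n|) :=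
    fun h y hy => h y (hconv_bdd y hy)
  have hbc : (∀ y : ℕ → ℝ, (∃ l, Tendsto y atTop (nhds l)) → Summable fun n => |tB b y n|) →
      (∀ y : ℕ → ℝ, Tendsto y atTop (nhds 0) → Summable fun n => |tB b y n|) :=
    fun h y hy => h y ⟨0, hy⟩
  refine ⟨?_, ?_, ?_⟩
  · rw [htrans (fun f => ∃ M : ℝ, ∀ n, |f n| ≤ M)]
    exact ⟨fun h => hcs (hbc (hab h)), fun h => hsa h⟩
  · rw [htrans (fun f => ∃ l : ℝ, Tendsto f atTop (nhds l))]
    exact ⟨fun h => hcs (hbc h), fun h => hab (hsa h)⟩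
  · rw [htrans (fun f => Tendsto f atTop (nhds 0))]
    exact ⟨fun h => hcs h, fun h => hbc (hab (hsa h))⟩
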